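/- Let B be a commutative group and f : ℤ → B. If Δ^{m+1} f ≡ 0 (where Δf(x) = f(x+1) - f(x)) and Δ^m f is not identically zero, then f equals the function of a binomial polynomial ∑_{δ=0}^{m} b_δ C(x,δ) with b_m ≠ 0; in particular the functional degree of f equals the degree of its unique binomial-polynomial representation. -/

import Mathlib

/-- The discrete difference operator: `(dOp g f) x = f (x + g) - f x`. -/
def dOp {A B : Type*} [AddCommGroup A] [AddCommGroup B] (g : A) (f : A → B) : A → B :=
  fun x => f (x + g) - f x

private lemma ext_of_step {B : Type*} [AddCommGroup B] (F G : ℤ → B) (h0 : F 0 = G 0)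
    (hs : ∀ x : ℤ, F (x + 1) - F x = G (x + 1) - G x) : ∀ x : ℤ, F x = G x := by
  intro x
  induction x using Int.induction_on with
  | zero => exact h0
  | succ i hi =>
    have h := hs i
    have e : F ((i : ℤ) + 1) = (F ((i : ℤ) + 1) - F i) + F i := by abel
    rw [e, h, hi]; abel
  | pred i hi =>
    have h := hs (-(i : ℤ) - 1)
    have e1 : (-(i : ℤ) - 1) + 1 = -(i : ℤ) := by ring
    rw [e1] at h
    have e : F (-(i : ℤ) - 1) = F (-(i : ℤ)) - (F (-(i : ℤ)) - F (-(i : ℤ) - 1)) := by abel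
    rw [e, h, hi]; abel

private lemma pascal_sum {B : Type*} [AddCommGroup B] (b : ℕ → B) (n : ℕ) (x : ℤ) :
    ∑ δ ∈ Finset.range (n + 1), Ring.choose (x + 1) δ • b δ =
      ∑ δ ∈ Finset.range (n + 1), Ring.choose x δ • b δ
        + ∑ δ ∈ Finset.range n, Ring.choose x δ • b (δ + 1) := by
  rw [Finset.sum_range_succ' (fun δ => Ring.choose (x + 1) δ • b δ),
      Finset.sum_range_succ' (fun δ => Ring.choose x δ • b δ)]
  simp only [Ring.choose_zero_right, Ring.choose_succ_succ, add_smul, one_smul]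
  rw [Finset.sum_add_distrib]
  abel

private lemma rep {B : Type*} [AddCommGroup B] :
    ∀ (n : ℕ) (f : ℤ → B), (dOp (1 : ℤ))^[n] f = 0 →
      ∀ x : ℤ, f x = ∑ δ ∈ Finset.range n, Ring.choose x δ • (dOp (1 : ℤ))^[δ] f 0 := by
  intro n
  induction n with
  | zero => intro f h x; simpa using congrFun h x
  | succ n ih =>
    intro f h
    have hg : (dOp (1 : ℤ))^[n] (dOp 1 f) = 0 := by
      rw [← Function.iterate_succ_apply]; exact h
    have hG := ih (dOp 1 f) hg
    have hb : ∀ δ, (dOp (1 : ℤ))^[δ] (dOp 1 f) 0 = (dOp (1 : ℤ))^[δ + 1] f 0 := fun δ => by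
      rw [Function.iterate_succ_apply]
    have hgx : ∀ x : ℤ, f (x + 1) - f x
        = ∑ δ ∈ Finset.range n, Ring.choose x δ • (dOp (1 : ℤ))^[δ + 1] f 0 := by
      intro x
      have := hG x
      simp only [hb] at this
      simpa [dOp] using this
    apply ext_of_step
    · simp [Finset.sum_range_succ', Ring.choose_zero_succ]
    · intro x
      rw [hgx x, pascal_sum (fun δ => (dOp (1 : ℤ))^[δ] f 0) n x]
      abel

/-- A function `f : ℤ → B` of functional degree exactly `m` is given by a binomial
polynomial (polyfract) of degree exactly `m`: `f x = ∑_{δ=0}^{m} b_δ • C(x,δ)` with `b m ≠ 0`. -/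
theorem fdeg_eq_polyfract_degree {B : Type*} [AddCommGroup B] (f : ℤ → B) (m : ℕ)
    (h : (dOp (1 : ℤ))^[m + 1] f = 0) (h' : (dOp (1 : ℤ))^[m] f ≠ 0) :
    ∃ b : ℕ → B, b m ≠ 0 ∧
      ∀ x : ℤ, f x = ∑ δ ∈ Finset.range (m + 1), Ring.choose x δ • b δ := by
  refine ⟨fun δ => (dOp (1 : ℤ))^[δ] f 0, ?_, rep (m + 1) f h⟩
  intro hbm
  set F := (dOp (1 : ℤ))^[m] f with hF
  have hdF : dOp (1 : ℤ) F = 0 := by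
    rw [hF]; rw [← Function.iterate_succ_apply' (dOp (1 : ℤ)) m f]; exact h
  have hc : ∀ x : ℤ, F x = F 0 := by
    apply ext_of_step F (fun _ => F 0) rfl
    intro x
    have := congrFun hdF x
    simpa [dOp] using this
  apply h'
  funext x
  show F x = 0
  rw [hc x]
  exact hbm
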